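/- Let E₁, …, E_m be nontrivial word equations on n unknowns, let L ∈ ℕ^n have at most one zero component, and let q_{ij} = Q_{E_i, x_j, L}. If the system has a common solution of some rank r ≥ 1 and length type L, and the rank of the m × n matrix (q_{ij}) over the field ℚ(X) of rational functions equals 1, then the equations E₁, …, E_m all have exactly the same set of solutions of length type L. -/

import Mathlib

open Polynomial

/-- The characteristic polynomial `P(w)` of a word. -/
noncomputable def wordPoly (w : List ℕ) : Polynomial ℤ :=
  ∑ i ∈ Finset.range w.length, Polynomial.C (w.getD i 0 : ℤ) * Polynomial.X ^ i

/-- Application of a morphism (given by the images of the unknowns) to a word. -/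
def mApply {n : ℕ} {β : Type*} (h : Fin n → List β) (w : List (Fin n)) : List β :=
  (w.map h).flatten

/-- The morphism maps every unknown to a word over the alphabet `A`. -/
def IntoAlph {n : ℕ} (A : Finset ℕ) (h : Fin n → List ℕ) : Prop :=
  ∀ i, ∀ a ∈ h i, a ∈ A

/-- `w` is a product of words from `A`. -/
def InStar (A : Finset (List ℕ)) (w : List ℕ) : Prop :=
  ∃ l : List (List ℕ), (∀ u ∈ l, u ∈ A) ∧ l.flatten = w

/-- The combinatorial rank of a morphism: the smallest `r` such that there is a set of
`r` words whose products contain all images of the unknowns. -/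
noncomputable def mRank {n : ℕ} (h : Fin n → List ℕ) : ℕ :=
  sInf {r | ∃ A : Finset (List ℕ), A.card = r ∧ ∀ i, InStar A (h i)}

/-- The length type of a morphism, as a rational vector. -/
def lenQ {n : ℕ} (h : Fin n → List ℕ) : Fin n → ℚ :=
  fun i => ((h i).length : ℚ)

/-- `|w|_L`: the length of the image of `w` under any morphism of length type `L`. -/
def lenL {n : ℕ} (L : Fin n → ℕ) (w : List (Fin n)) : ℕ :=
  (w.map L).sum

/-- The polynomial `Q_{E,x,L}` for the word equation `u = v`, the unknown `x` and the
length type `L`. -/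
noncomputable def eqPoly {n : ℕ} (u v : List (Fin n)) (x : Fin n) (L : Fin n → ℕ) :
    Polynomial ℤ :=
  (∑ i ∈ Finset.range u.length,
      if u.getD i x = x then (Polynomial.X : Polynomial ℤ) ^ lenL L (u.take i) else 0)
    - ∑ i ∈ Finset.range v.length,
      if v.getD i x = x then (Polynomial.X : Polynomial ℤ) ^ lenL L (v.take i) else 0

/-- Embedding of `ℤ[X]` into the field `ℚ(X)` of rational functions. -/
noncomputable def toRF (p : Polynomial ℤ) : RatFunc ℚ :=
  algebraMap (Polynomial ℚ) (RatFunc ℚ) (p.map (Int.castRingHom ℚ))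

noncomputable def Sword {n : ℕ} (L : Fin n → ℕ) (w : List (Fin n)) (x : Fin n) :
    Polynomial ℤ :=
  ∑ i ∈ Finset.range w.length,
    if w.getD i x = x then (Polynomial.X : Polynomial ℤ) ^ lenL L (w.take i) else 0

lemma lenL_nil {n : ℕ} (L : Fin n → ℕ) : lenL L [] = 0 := rfl

lemma lenL_cons {n : ℕ} (L : Fin n → ℕ) (c : Fin n) (w : List (Fin n)) :
    lenL L (c :: w) = L c + lenL L w := by simp [lenL]

lemma Sword_nil {n : ℕ} (L : Fin n → ℕ) (x : Fin n) : Sword L [] x = 0 := by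
  simp [Sword]

lemma Sword_cons {n : ℕ} (L : Fin n → ℕ) (c : Fin n) (w : List (Fin n)) (x : Fin n) :
    Sword L (c :: w) x = (if c = x then 1 else 0) + X ^ (L c) * Sword L w x := by
  unfold Sword
  rw [List.length_cons, Finset.sum_range_succ']
  simp only [List.getD_cons_succ, List.getD_cons_zero, List.take_succ_cons,
    List.take_zero, lenL_nil, lenL_cons, pow_zero, pow_add, Finset.mul_sum, mul_ite, mul_zero]
  ring

lemma wordPoly_nil : wordPoly [] = 0 := by simp [wordPoly]

lemma wordPoly_cons (a : ℕ) (w : List ℕ) :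
    wordPoly (a :: w) = C (a : ℤ) + X * wordPoly w := by
  unfold wordPoly
  rw [List.length_cons, Finset.sum_range_succ']
  simp only [List.getD_cons_succ, List.getD_cons_zero, pow_succ, pow_zero, mul_one]
  rw [add_comm, Finset.mul_sum]
  congr 1
  exact Finset.sum_congr rfl fun i _ => by ring

lemma wordPoly_append (a b : List ℕ) :
    wordPoly (a ++ b) = wordPoly a + X ^ a.length * wordPoly b := by
  induction a with
  | nil => simp [wordPoly_nil]
  | cons x a ih =>
      rw [List.cons_append, wordPoly_cons, wordPoly_cons, ih, List.length_cons]
      ring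

lemma wordPoly_coeff (w : List ℕ) (k : ℕ) : (wordPoly w).coeff k = (w.getD k 0 : ℤ) := by
  unfold wordPoly
  rw [finset_sum_coeff]
  simp only [coeff_C_mul, coeff_X_pow]
  by_cases hk : k < w.length
  · rw [Finset.sum_eq_single k]
    · simp
    · intro b _ hb; simp [Ne.symm hb]
    · intro hc; exact absurd (Finset.mem_range.mpr hk) hc
  · rw [Finset.sum_eq_zero, List.getD_eq_default _ _ (not_lt.mp hk)]
    · simp
    · intro b hb
      have : b ≠ k := by
        intro e; exact hk (e ▸ Finset.mem_range.mp hb)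
      simp [Ne.symm this]

lemma wordPoly_inj {w₁ w₂ : List ℕ} (h₁ : ∀ a ∈ w₁, 0 < a) (h₂ : ∀ a ∈ w₂, 0 < a)
    (he : wordPoly w₁ = wordPoly w₂) : w₁ = w₂ := by
  have hc : ∀ k, (w₁.getD k 0 : ℤ) = (w₂.getD k 0 : ℤ) := by
    intro k; rw [← wordPoly_coeff, ← wordPoly_coeff, he]
  have hc' : ∀ k, w₁.getD k 0 = w₂.getD k 0 := fun k => by exact_mod_cast hc k
  have hlen : w₁.length = w₂.length := by
    by_contra hne
    rcases Nat.lt_or_ge w₁.length w₂.length with hlt | hge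
    · have h0 := hc' w₁.length
      rw [List.getD_eq_default _ _ le_rfl, List.getD_eq_getElem _ _ hlt] at h0
      have hm : w₂[w₁.length] ∈ w₂ := List.getElem_mem hlt
      have := h₂ _ hm
      omega
    · have hlt : w₂.length < w₁.length := lt_of_le_of_ne hge (Ne.symm hne)
      have h0 := hc' w₂.length
      rw [List.getD_eq_default w₂ _ le_rfl, List.getD_eq_getElem _ _ hlt] at h0
      have hm : w₁[w₂.length] ∈ w₁ := List.getElem_mem hlt
      have := h₁ _ hm
      omega
  apply List.ext_getElem hlen
  intro i hi1 hi2
  have := hc' i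
  rwa [List.getD_eq_getElem _ _ hi1, List.getD_eq_getElem _ _ hi2] at this

lemma mApply_nil {n : ℕ} (g : Fin n → List ℕ) : mApply g [] = [] := rfl

lemma mApply_cons {n : ℕ} (g : Fin n → List ℕ) (c : Fin n) (w : List (Fin n)) :
    mApply g (c :: w) = g c ++ mApply g w := by simp [mApply]

lemma key_identity {n : ℕ} (L : Fin n → ℕ) (g : Fin n → List ℕ)
    (hg : ∀ j, (g j).length = L j) (w : List (Fin n)) :
    wordPoly (mApply g w) = ∑ j, Sword L w j * wordPoly (g j) := by
  induction w with
  | nil => simp [mApply_nil, wordPoly_nil, Sword_nil]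
  | cons c w ih =>
      rw [mApply_cons, wordPoly_append, hg, ih]
      have : ∀ j : Fin n, Sword L (c :: w) j * wordPoly (g j)
          = (if c = j then wordPoly (g j) else 0) + X ^ (L c) * (Sword L w j * wordPoly (g j)) := by
        intro j
        rw [Sword_cons]
        by_cases hj : c = j <;> simp [hj] <;> ring
      rw [Finset.sum_congr rfl fun j _ => this j, Finset.sum_add_distrib,
        Finset.sum_ite_eq Finset.univ c (fun j => wordPoly (g j)), ← Finset.mul_sum]
      simp

lemma Sword_coeff_nonneg {n : ℕ} (L : Fin n → ℕ) (w : List (Fin n)) (x : Fin n) (k : ℕ) :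
    0 ≤ (Sword L w x).coeff k := by
  unfold Sword
  rw [finset_sum_coeff]
  apply Finset.sum_nonneg
  intro i _
  by_cases hi : w.getD i x = x
  · rw [if_pos hi, coeff_X_pow]
    split <;> norm_num
  · rw [if_neg hi, coeff_zero]

lemma Sword_mul_coeff_zero_nonneg {n : ℕ} (L : Fin n → ℕ) (w : List (Fin n)) (x : Fin n)
    (k : ℕ) : 0 ≤ ((X : Polynomial ℤ) ^ k * Sword L w x).coeff 0 := by
  rw [mul_coeff_zero]
  apply mul_nonneg
  · rw [coeff_X_pow]; split <;> norm_num
  · exact Sword_coeff_nonneg L w x 0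

lemma head_clash {n : ℕ} (L : Fin n → ℕ) {a b : Fin n} (hab : a ≠ b) (hLb : 0 < L b)
    {u v : List (Fin n)} (he : Sword L (a :: u) a = Sword L (b :: v) a) : False := by
  have h0 : (Sword L (a :: u) a).coeff 0 = (Sword L (b :: v) a).coeff 0 := by rw [he]
  rw [Sword_cons, Sword_cons, if_pos rfl, if_neg (Ne.symm hab)] at h0
  rw [coeff_add, coeff_add, coeff_one, if_pos rfl, coeff_zero, zero_add] at h0
  have h1 : ((X : Polynomial ℤ) ^ (L b) * Sword L v a).coeff 0 = 0 := by
    rw [mul_coeff_zero, coeff_X_pow, if_neg (by omega)]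
    ring
  have h2 := Sword_mul_coeff_zero_nonneg L u a (L a)
  rw [h1] at h0
  omega

lemma nil_clash {n : ℕ} (L : Fin n → ℕ) {b : Fin n} {v : List (Fin n)}
    (he : Sword L [] b = Sword L (b :: v) b) : False := by
  have h0 : (Sword L [] b).coeff 0 = (Sword L (b :: v) b).coeff 0 := by rw [he]
  rw [Sword_nil, Sword_cons, if_pos rfl, coeff_zero, coeff_add, coeff_one, if_pos rfl] at h0
  have h2 := Sword_mul_coeff_zero_nonneg L v b (L b)
  omega

lemma Sword_determines {n : ℕ} (L : Fin n → ℕ)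
    (hL0 : (Finset.univ.filter fun j : Fin n => L j = 0).card ≤ 1) :
    ∀ u v : List (Fin n), (∀ j, Sword L u j = Sword L v j) → u = v := by
  intro u
  induction u with
  | nil =>
      intro v hv
      cases v with
      | nil => rfl
      | cons b v => exact absurd (hv b) (fun he => nil_clash L he)
  | cons a u ih =>
      intro v hv
      cases v with
      | nil => exact absurd (hv a).symm (fun he => nil_clash L he)
      | cons b v =>
          by_cases hab : a = b
          · subst hab
            have htail : ∀ j, Sword L u j = Sword L v j := by
              intro j
              have := hv j
              rw [Sword_cons, Sword_cons] at this
              have h2 : (X : Polynomial ℤ) ^ (L a) * Sword L u j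
                  = X ^ (L a) * Sword L v j := by
                exact add_left_cancel this
              exact mul_left_cancel₀ (pow_ne_zero _ X_ne_zero) h2
            rw [ih v htail]
          · exfalso
            have hz : 0 < L a ∨ 0 < L b := by
              by_contra hc
              push_neg at hc
              have ha : a ∈ Finset.univ.filter fun j : Fin n => L j = 0 := by
                simp [Nat.le_zero.mp hc.1]
              have hb : b ∈ Finset.univ.filter fun j : Fin n => L j = 0 := by
                simp [Nat.le_zero.mp hc.2]
              have : ({a, b} : Finset (Fin n)).card
                  ≤ (Finset.univ.filter fun j : Fin n => L j = 0).card := by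
                apply Finset.card_le_card
                intro x hx
                rcases Finset.mem_insert.mp hx with h | h
                · exact h ▸ ha
                · exact (Finset.mem_singleton.mp h) ▸ hb
              rw [Finset.card_insert_of_notMem (by simp [hab]), Finset.card_singleton] at this
              omega
            rcases hz with hz | hz
            · exact head_clash L (Ne.symm hab) hz (hv b).symm
            · exact head_clash L hab hz (hv a)

noncomputable def toRFHom : Polynomial ℤ →+* RatFunc ℚ :=
  (algebraMap (Polynomial ℚ) (RatFunc ℚ)).comp (Polynomial.mapRingHom (Int.castRingHom ℚ))

lemma toRF_eq (p : Polynomial ℤ) : toRF p = toRFHom p := rfl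

lemma toRF_injective : Function.Injective toRF := by
  intro p q h
  have h1 : Function.Injective (Polynomial.map (Int.castRingHom ℚ)) :=
    Polynomial.map_injective _ Int.cast_injective
  have h2 := IsFractionRing.injective (Polynomial ℚ) (RatFunc ℚ)
  exact h1 (h2 h)

lemma rank_one_rows {K : Type*} [Field K] {m n : ℕ} (M : Matrix (Fin m) (Fin n) K)
    (hrank : M.rank = 1) (hrow : ∀ i, M i ≠ 0) (p : Fin n → K)
    (i₁ i₂ : Fin m) (h1 : ∑ j, M i₁ j * p j = 0) : ∑ j, M i₂ j * p j = 0 := by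
  have hspan : Submodule.span K {M i₁} = Submodule.span K (Set.range M) := by
    apply Submodule.eq_of_le_of_finrank_le
    · exact Submodule.span_mono (Set.singleton_subset_iff.mpr (Set.mem_range_self i₁))
    · rw [finrank_span_singleton (hrow i₁)]
      exact ((Matrix.rank_eq_finrank_span_row M).symm.trans hrank).le
  have hmem : M i₂ ∈ Submodule.span K ({M i₁} : Set (Fin n → K)) := by
    rw [hspan]
    exact Submodule.subset_span (Set.mem_range_self i₂)
  obtain ⟨c, hc⟩ := Submodule.mem_span_singleton.mp hmem
  rw [← hc]
  have : ∀ j, (c • M i₁) j * p j = c * (M i₁ j * p j) := by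
    intro j; simp [mul_assoc]
  rw [Finset.sum_congr rfl fun j _ => this j, ← Finset.mul_sum, h1, mul_zero]

/-- Let `E₁, …, E_m` be nontrivial equations and `L` a length type with at most one zero
component. If the system has a common solution of rank `≥ 1` and length type `L`, and the
matrix of the polynomials `Q_{Eᵢ,xⱼ,L}` has rank `1` over `ℚ(X)`, then all the equations
have exactly the same solutions of length type `L`. -/
theorem rank_one_same_solutions {n m : ℕ}
    (A : Finset ℕ) (hA : ∀ a ∈ A, 0 < a)
    (eqs : Fin m → List (Fin n) × List (Fin n))
    (hnt : ∀ i, (eqs i).1 ≠ (eqs i).2)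
    (L : Fin n → ℕ)
    (hL0 : (Finset.univ.filter fun j : Fin n => L j = 0).card ≤ 1)
    (h : Fin n → List ℕ) (hh : IntoAlph A h)
    (hsol : ∀ i, mApply h (eqs i).1 = mApply h (eqs i).2)
    (hr : 1 ≤ mRank h)
    (hL : ∀ j, (h j).length = L j)
    (hrank : Matrix.rank (Matrix.of fun (i : Fin m) (j : Fin n) =>
      toRF (eqPoly (eqs i).1 (eqs i).2 j L)) = 1) :
    ∀ i₁ i₂ : Fin m, ∀ g : Fin n → List ℕ, IntoAlph A g → (∀ j, (g j).length = L j) →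
      (mApply g (eqs i₁).1 = mApply g (eqs i₁).2 ↔
        mApply g (eqs i₂).1 = mApply g (eqs i₂).2) := by
  intro i₁ i₂ g hg hgL
  have heq : ∀ (u v : List (Fin n)) (x : Fin n), eqPoly u v x L = Sword L u x - Sword L v x :=
    fun u v x => rfl
  have hpos : ∀ w : List (Fin n), ∀ a ∈ mApply g w, 0 < a := by
    intro w a ha
    rw [mApply, List.mem_flatten] at ha
    obtain ⟨l, hl, hal⟩ := ha
    obtain ⟨x, hx, rfl⟩ := List.mem_map.mp hl
    exact hA _ (hg x _ hal)
  have bridge : ∀ i : Fin m,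
      (mApply g (eqs i).1 = mApply g (eqs i).2 ↔
        ∑ j, toRF (eqPoly (eqs i).1 (eqs i).2 j L) * toRF (wordPoly (g j)) = 0) := by
    intro i
    have hid : ∑ j, eqPoly (eqs i).1 (eqs i).2 j L * wordPoly (g j)
        = wordPoly (mApply g (eqs i).1) - wordPoly (mApply g (eqs i).2) := by
      rw [key_identity L g hgL, key_identity L g hgL, ← Finset.sum_sub_distrib]
      exact Finset.sum_congr rfl fun j _ => by rw [heq]; ring
    have hmap : ∑ j, toRF (eqPoly (eqs i).1 (eqs i).2 j L) * toRF (wordPoly (g j))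
        = toRF (wordPoly (mApply g (eqs i).1)) - toRF (wordPoly (mApply g (eqs i).2)) := by
      simp only [toRF_eq, ← map_mul, ← map_sum, ← map_sub, hid]
    rw [hmap, sub_eq_zero]
    constructor
    · intro he; rw [he]
    · intro he
      exact wordPoly_inj (hpos _) (hpos _) (toRF_injective he)
  rw [bridge i₁, bridge i₂]
  have hrow : ∀ i : Fin m, (Matrix.of fun (i : Fin m) (j : Fin n) =>
      toRF (eqPoly (eqs i).1 (eqs i).2 j L)) i ≠ 0 := by
    intro i hzero
    apply hnt i
    apply Sword_determines L hL0
    intro j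
    have h1 : toRF (eqPoly (eqs i).1 (eqs i).2 j L) = 0 := congrFun hzero j
    have h0 : eqPoly (eqs i).1 (eqs i).2 j L = 0 := by
      apply toRF_injective
      rw [h1, toRF_eq, map_zero]
    rw [heq] at h0
    exact sub_eq_zero.mp h0
  constructor
  · exact fun h1 => rank_one_rows _ hrank hrow (fun j => toRF (wordPoly (g j))) i₁ i₂ h1
  · exact fun h1 => rank_one_rows _ hrank hrow (fun j => toRF (wordPoly (g j))) i₂ i₁ h1
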